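/- There exists a constant j₁ > 0 such that for all x ≥ 0, ∫₀^∞ dh / ((1+(x-h)²)(1+h²)) ≤ j₁ / (x² + 1). -/
import Mathlib


open MeasureTheory Real Set

/-- There exists `j₁ > 0` such that for all `x ≥ 0`,
`∫₀^∞ dh/((1+(x-h)²)(1+h²)) ≤ j₁/(x²+1)`. -/
theorem stmt7 :
    ∃ j : ℝ, 0 < j ∧
      ∀ x : ℝ, 0 ≤ x →
        (∫ h in Ioi (0 : ℝ), 1 / ((1 + (x - h) ^ 2) * (1 + h ^ 2)))
          ≤ j / (x ^ 2 + 1) := by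
  refine ⟨3 * π, by positivity, fun x _ => ?_⟩
  -- integrability facts
  have hI1 : Integrable (fun h : ℝ => (1 + (x - h) ^ 2)⁻¹) := by
    simpa using integrable_inv_one_add_sq.comp_sub_left x
  have hI2 : Integrable (fun h : ℝ => (1 + h ^ 2)⁻¹) := integrable_inv_one_add_sq
  have hIf : IntegrableOn (fun h : ℝ => 1 / ((1 + (x - h) ^ 2) * (1 + h ^ 2))) (Ioi 0) := by
    refine (hI2.integrableOn.mono' ?_ ?_)
    · have hc : Continuous fun h : ℝ => 1 / ((1 + (x - h) ^ 2) * (1 + h ^ 2)) := by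
        apply Continuous.div continuous_const
        · continuity
        · intro h; positivity
      exact hc.aestronglyMeasurable.restrict
    · filter_upwards with h
      have hA : (1:ℝ) ≤ 1 + (x - h) ^ 2 := by nlinarith [sq_nonneg (x - h)]
      have hB : (0:ℝ) < 1 + h ^ 2 := by positivity
      rw [Real.norm_eq_abs, abs_of_nonneg (by positivity)]
      have hmul : (1 + (x - h) ^ 2)⁻¹ * (1 + h ^ 2)⁻¹ ≤ 1 * (1 + h ^ 2)⁻¹ :=
        mul_le_mul_of_nonneg_right (inv_le_one_of_one_le₀ hA) (by positivity)
      rw [one_div, mul_inv]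
      simpa using hmul
  have hg : IntegrableOn
      (fun h : ℝ => 2 / (x ^ 2 + 1) * ((1 + (x - h) ^ 2)⁻¹ + (1 + h ^ 2)⁻¹)) (Ioi 0) :=
    ((hI1.add hI2).const_mul _).integrableOn
  -- pointwise bound
  have hpt : ∀ h ∈ Ioi (0:ℝ),
      1 / ((1 + (x - h) ^ 2) * (1 + h ^ 2))
        ≤ 2 / (x ^ 2 + 1) * ((1 + (x - h) ^ 2)⁻¹ + (1 + h ^ 2)⁻¹) := by
    intro h _
    have hA : (0:ℝ) < 1 + (x - h) ^ 2 := by positivity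
    have hB : (0:ℝ) < 1 + h ^ 2 := by positivity
    have heq : 2 / (x ^ 2 + 1) * ((1 + (x - h) ^ 2)⁻¹ + (1 + h ^ 2)⁻¹)
        = 2 * ((1 + (x - h) ^ 2) + (1 + h ^ 2)) / ((x ^ 2 + 1) * ((1 + (x - h) ^ 2) * (1 + h ^ 2))) := by
      field_simp
      ring
    rw [heq, div_le_div_iff₀ (by positivity) (by positivity)]
    nlinarith [sq_nonneg (x - 2 * h), sq_nonneg (x - h), sq_nonneg h,
      mul_pos hA hB, sq_nonneg ((x - h) * h)]
  -- compare integrals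
  have hmono := setIntegral_mono_on hIf hg measurableSet_Ioi hpt
  -- compute/estimate the right-hand integral
  have hint1 : ∫ h in Ioi (0:ℝ), (1 + (x - h) ^ 2)⁻¹ ≤ π := by
    have hnn : 0 ≤ᵐ[volume] fun h : ℝ => (1 + (x - h) ^ 2)⁻¹ := by
      filter_upwards with h; positivity
    have := setIntegral_le_integral (s := Ioi (0:ℝ)) hI1 hnn
    have huniv : ∫ h : ℝ, (1 + (x - h) ^ 2)⁻¹ = π := by
      rw [show (fun h : ℝ => (1 + (x - h) ^ 2)⁻¹) = fun h : ℝ => (fun u : ℝ => (1 + u ^ 2)⁻¹) (x - h) from rfl,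
        integral_sub_left_eq_self (fun u : ℝ => (1 + u ^ 2)⁻¹) volume x,
        integral_univ_inv_one_add_sq]
    linarith
  have hint2 : ∫ h in Ioi (0:ℝ), (1 + h ^ 2)⁻¹ = π / 2 := by
    rw [integral_Ioi_inv_one_add_sq, arctan_zero, sub_zero]
  have hsplit : ∫ h in Ioi (0:ℝ),
      2 / (x ^ 2 + 1) * ((1 + (x - h) ^ 2)⁻¹ + (1 + h ^ 2)⁻¹)
      = 2 / (x ^ 2 + 1) * ((∫ h in Ioi (0:ℝ), (1 + (x - h) ^ 2)⁻¹)
          + ∫ h in Ioi (0:ℝ), (1 + h ^ 2)⁻¹) := by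
    rw [integral_const_mul, integral_add hI1.integrableOn hI2.integrableOn]
  have hx : (0:ℝ) < x ^ 2 + 1 := by positivity
  calc (∫ h in Ioi (0 : ℝ), 1 / ((1 + (x - h) ^ 2) * (1 + h ^ 2)))
      ≤ 2 / (x ^ 2 + 1) * ((∫ h in Ioi (0:ℝ), (1 + (x - h) ^ 2)⁻¹)
          + ∫ h in Ioi (0:ℝ), (1 + h ^ 2)⁻¹) := by rw [← hsplit]; exact hmono
    _ ≤ 2 / (x ^ 2 + 1) * (π + π / 2) := by
        refine mul_le_mul_of_nonneg_left ?_ (by positivity)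
        rw [hint2]
        exact add_le_add hint1 le_rfl
    _ = 3 * π / (x ^ 2 + 1) := by field_simp; ring
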